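/- For any circular binary word W of length n ≥ 4, the difference |W|_{1101} − |W|_{1011} equals the difference |W|_{1010} − |W|_{0101} (as integers). -/

import Mathlib

/-- Number of cyclic occurrences of the word `U` (of length `k`) in the circular
binary word `W` of length `n`. -/
def occ (n k : ℕ) [NeZero n] (W : ZMod n → Fin 2) (U : Fin k → Fin 2) : ℕ :=
  (Finset.univ.filter (fun i : ZMod n => ∀ j : Fin k, W (i + (j.val : ZMod n)) = U j)).card

lemma occ4_eq (n : ℕ) [NeZero n] (W : ZMod n → Fin 2) (U : Fin 4 → Fin 2) :
    occ n 4 W U = (Finset.univ.filter (fun i : ZMod n =>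
      W i = U 0 ∧ W (i+1) = U 1 ∧ W (i+2) = U 2 ∧ W (i+3) = U 3)).card := by
  unfold occ
  congr 1
  apply Finset.filter_congr
  intro i _
  constructor
  · intro h
    refine ⟨?_, ?_, ?_, ?_⟩ <;> [have := h 0; have := h 1; have := h 2; have := h 3] <;>
      simpa using this
  · rintro ⟨h0, h1, h2, h3⟩ j
    fin_cases j <;> simpa

lemma fin2_ne_one (a : Fin 2) : ¬ a = 1 ↔ a = 0 := by omega

theorem stmt_5 (n : ℕ) [NeZero n] (hn : 4 ≤ n) (W : ZMod n → Fin 2) :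
    (occ n 4 W ![1,1,0,1] : ℤ) - occ n 4 W ![1,0,1,1]
      = (occ n 4 W ![1,0,1,0] : ℤ) - occ n 4 W ![0,1,0,1] := by
  have key : occ n 4 W ![1,1,0,1] + occ n 4 W ![0,1,0,1]
      = occ n 4 W ![1,0,1,1] + occ n 4 W ![1,0,1,0] := by
    set A : Finset (ZMod n) := Finset.univ.filter
      (fun i => W (i+1) = 1 ∧ W (i+2) = 0 ∧ W (i+3) = 1) with hA
    set B : Finset (ZMod n) := Finset.univ.filter
      (fun i => W i = 1 ∧ W (i+1) = 0 ∧ W (i+2) = 1) with hB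
    have hL : occ n 4 W ![1,1,0,1] + occ n 4 W ![0,1,0,1] = A.card := by
      rw [occ4_eq, occ4_eq]
      have e1 : Finset.univ.filter (fun i : ZMod n =>
          W i = (![1,1,0,1] : Fin 4 → Fin 2) 0 ∧ W (i+1) = (![1,1,0,1] : Fin 4 → Fin 2) 1 ∧
          W (i+2) = (![1,1,0,1] : Fin 4 → Fin 2) 2 ∧ W (i+3) = (![1,1,0,1] : Fin 4 → Fin 2) 3)
          = A.filter (fun i => W i = 1) := by
        ext i; simp only [Finset.mem_filter, Finset.mem_univ, true_and]; simp [hA]; tauto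
      have e2 : Finset.univ.filter (fun i : ZMod n =>
          W i = (![0,1,0,1] : Fin 4 → Fin 2) 0 ∧ W (i+1) = (![0,1,0,1] : Fin 4 → Fin 2) 1 ∧
          W (i+2) = (![0,1,0,1] : Fin 4 → Fin 2) 2 ∧ W (i+3) = (![0,1,0,1] : Fin 4 → Fin 2) 3)
          = A.filter (fun i => ¬ W i = 1) := by
        ext i; simp only [Finset.mem_filter, Finset.mem_univ, true_and]; simp [hA, fin2_ne_one]; tauto
      rw [e1, e2, Finset.card_filter_add_card_filter_not]
    have hR : occ n 4 W ![1,0,1,1] + occ n 4 W ![1,0,1,0] = B.card := by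
      rw [occ4_eq, occ4_eq]
      have e1 : Finset.univ.filter (fun i : ZMod n =>
          W i = (![1,0,1,1] : Fin 4 → Fin 2) 0 ∧ W (i+1) = (![1,0,1,1] : Fin 4 → Fin 2) 1 ∧
          W (i+2) = (![1,0,1,1] : Fin 4 → Fin 2) 2 ∧ W (i+3) = (![1,0,1,1] : Fin 4 → Fin 2) 3)
          = B.filter (fun i => W (i+3) = 1) := by
        ext i; simp only [Finset.mem_filter, Finset.mem_univ, true_and]; simp [hB]; tauto
      have e2 : Finset.univ.filter (fun i : ZMod n =>
          W i = (![1,0,1,0] : Fin 4 → Fin 2) 0 ∧ W (i+1) = (![1,0,1,0] : Fin 4 → Fin 2) 1 ∧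
          W (i+2) = (![1,0,1,0] : Fin 4 → Fin 2) 2 ∧ W (i+3) = (![1,0,1,0] : Fin 4 → Fin 2) 3)
          = B.filter (fun i => ¬ W (i+3) = 1) := by
        ext i; simp only [Finset.mem_filter, Finset.mem_univ, true_and]; simp [hB, fin2_ne_one]; tauto
      rw [e1, e2, Finset.card_filter_add_card_filter_not]
    have hAB : A.card = B.card := by
      apply Finset.card_equiv (Equiv.addRight (1 : ZMod n))
      intro i
      simp only [hA, hB, Finset.mem_filter, Finset.mem_univ, true_and, Equiv.coe_addRight]
      have e1 : i + 1 + 1 = i + 2 := by ring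
      have e2 : i + 1 + 2 = i + 3 := by ring
      rw [e1, e2]
    rw [hL, hR, hAB]
  push_cast at key ⊢
  linarith
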